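/- Fix a strictly ordered dimension vector 0 < n_1 < n_2 < … < n_r = n (set n_0 = 0, k_i = n_{i+1} − n_i) and let β_i = (0_{n_i×k_i} ∣ I_{n_i}) be the standard projections. Suppose (α, β) satisfies the complex moment map equations at level (λ_1,…,λ_{r−1}) and (α', β) satisfies them at level (λ'_1,…,λ'_{r−1}), where β denotes the same standard maps in both quivers. If α_{r−1} β_{r−1} = α'_{r−1} β_{r−1}, then α_i = α'_i for all i = 1,…,r−1 and λ_i = λ'_i for all i; that is, with the β's standardised, the whole quiver diagram and the level are determined by X = α_{r−1}β_{r−1}. -/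

import Mathlib

open Matrix

/-- The standard surjection `β = (0_{a×(b-a)} ∣ I_a) : ℂ^b → ℂ^a`
(projection onto the last `a` coordinates, for `a ≤ b`). -/
def stdBeta (a b : ℕ) : Matrix (Fin a) (Fin b) ℂ :=
  Matrix.of fun j k => if (k : ℕ) = (j : ℕ) + (b - a) then 1 else 0

lemma stdBeta_mul_transpose (a b : ℕ) (h : a ≤ b) :
    stdBeta a b * (stdBeta a b)ᵀ = 1 := by
  ext j j'
  simp only [Matrix.mul_apply, Matrix.transpose_apply, stdBeta, Matrix.of_apply]
  have hj : (j : ℕ) + (b - a) < b := by omega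
  rw [Finset.sum_eq_single (⟨(j : ℕ) + (b - a), hj⟩ : Fin b)]
  · by_cases hjj : j = j'
    · subst hjj; simp [Matrix.one_apply]
    · have : ¬ ((j:ℕ) + (b-a) = (j':ℕ) + (b-a)) := by
        intro hc; apply hjj; apply Fin.ext; omega
      simp [Matrix.one_apply, this, hjj]; exact fun hc => hjj (Fin.ext hc)
  · intro k _ hk
    have : ¬ ((k:ℕ) = (j:ℕ) + (b-a)) := by
      intro hc; apply hk; apply Fin.ext; simpa using hc
    simp [this]
  · simp

lemma stdBeta_col_zero (a b : ℕ) (h : a < b) (j : Fin a) (hk : 0 < b) :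
    stdBeta a b j ⟨0, hk⟩ = 0 := by
  simp only [stdBeta, Matrix.of_apply]
  have : ¬ ((0:ℕ) = (j:ℕ) + (b - a)) := by omega
  simp [this]

theorem statement18 (m : ℕ) (dims : ℕ → ℕ) (h0 : dims 0 = 0)
    (hmono : ∀ i ≤ m, dims i < dims (i+1))
    (lam lam' : ℕ → ℂ)
    (α α' : ∀ i : ℕ, Matrix (Fin (dims (i+1))) (Fin (dims i)) ℂ)
    (hmm : ∀ j < m, α j * stdBeta (dims j) (dims (j+1)) -
      stdBeta (dims (j+1)) (dims (j+2)) * α (j+1) =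
        lam (j+1) • (1 : Matrix (Fin (dims (j+1))) (Fin (dims (j+1))) ℂ))
    (hmm' : ∀ j < m, α' j * stdBeta (dims j) (dims (j+1)) -
      stdBeta (dims (j+1)) (dims (j+2)) * α' (j+1) =
        lam' (j+1) • (1 : Matrix (Fin (dims (j+1))) (Fin (dims (j+1))) ℂ))
    (hX : α m * stdBeta (dims m) (dims (m+1)) = α' m * stdBeta (dims m) (dims (m+1))) :
    (∀ i, 1 ≤ i → i ≤ m → α i = α' i) ∧ (∀ i, 1 ≤ i → i ≤ m → lam i = lam' i) := by
  -- right-cancellation of `stdBeta`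
  have cancel : ∀ j ≤ m, ∀ (M N : Matrix (Fin (dims (j+1))) (Fin (dims j)) ℂ),
      M * stdBeta (dims j) (dims (j+1)) = N * stdBeta (dims j) (dims (j+1)) → M = N := by
    intro j hj M N h
    have hb := stdBeta_mul_transpose (dims j) (dims (j+1)) (le_of_lt (hmono j hj))
    calc M = M * (stdBeta (dims j) (dims (j+1)) * (stdBeta (dims j) (dims (j+1)))ᵀ) := by
            rw [hb, Matrix.mul_one]
      _ = N * (stdBeta (dims j) (dims (j+1)) * (stdBeta (dims j) (dims (j+1)))ᵀ) := by
            rw [← Matrix.mul_assoc, h, Matrix.mul_assoc]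
      _ = N := by rw [hb, Matrix.mul_one]
  -- main induction step
  have step : ∀ j, j < m → α (j+1) = α' (j+1) →
      lam (j+1) = lam' (j+1) ∧ α j = α' j := by
    intro j hj heq
    have h1 := hmm j hj
    have h2 := hmm' j hj
    rw [heq] at h1
    have h3 : α j * stdBeta (dims j) (dims (j+1)) - α' j * stdBeta (dims j) (dims (j+1))
        = (lam (j+1) - lam' (j+1)) •
          (1 : Matrix (Fin (dims (j+1))) (Fin (dims (j+1))) ℂ) := by
      rw [sub_smul, ← h1, ← h2]; abel
    have hlt : dims j < dims (j+1) := hmono j (le_of_lt hj)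
    have hpos : 0 < dims (j+1) := by omega
    set z : Fin (dims (j+1)) := ⟨0, hpos⟩ with hz
    have hzero : ∀ (M : Matrix (Fin (dims (j+1))) (Fin (dims j)) ℂ),
        (M * stdBeta (dims j) (dims (j+1))) z z = 0 := by
      intro M
      rw [Matrix.mul_apply]
      apply Finset.sum_eq_zero
      intro k _
      rw [hz, stdBeta_col_zero _ _ hlt k hpos, mul_zero]
    have h4 := congrFun (congrFun h3 z) z
    rw [Matrix.sub_apply, hzero, hzero, Matrix.smul_apply, Matrix.one_apply_eq,
      smul_eq_mul, mul_one, sub_zero] at h4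
    have hlam : lam (j+1) = lam' (j+1) := by
      have h5 : lam (j+1) - lam' (j+1) = 0 := h4.symm
      linear_combination h5
    refine ⟨hlam, cancel j (le_of_lt hj) _ _ ?_⟩
    have h6 : α j * stdBeta (dims j) (dims (j+1)) - α' j * stdBeta (dims j) (dims (j+1)) = 0 := by
      rw [h3, hlam]; simp
    have := sub_eq_zero.mp h6
    exact this
  -- downward induction: all αs agree
  have key : ∀ i, i ≤ m → α i = α' i := by
    intro i hi
    exact Nat.decreasingInduction (motive := fun k _ => α k = α' k)
      (fun k hk ih => (step k hk ih).2) (cancel m le_rfl _ _ hX) hi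
  refine ⟨fun i _ hi => key i hi, fun i h1 hi => ?_⟩
  obtain ⟨j, rfl⟩ : ∃ j, i = j + 1 := ⟨i - 1, by omega⟩
  exact (step j (by omega) (key (j+1) hi)).1
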